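/- Fix an angle φ with 0 < φ < arccos(1/(√5 − 1)). Let z₁ be real with 1 < z₁ ≤ 2 and set ξ = −3(1 + z₁⁴)/z₁² (so that z₁ is a saddle point of the phase). Then for every z = z₁ + u + iv with u > 0, 0 < v ≤ u·tan φ, and |z| ≤ 2, one has Re(2iθ(z)) ≤ −(1/4) u² v. -/

import Mathlib

/-- The phase function `θ(z) = λ(z)(ξ + 4 k(z)² + 2)` of the RH problem for the
defocusing mKdV equation with nonzero boundary conditions, where
`λ(z) = (z - z⁻¹)/2` and `k(z) = (z + z⁻¹)/2`. -/
noncomputable def theta (ξ : ℝ) (z : ℂ) : ℂ :=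
  ((z - z⁻¹) / 2) * ((ξ : ℂ) + 4 * ((z + z⁻¹) / 2) ^ 2 + 2)

/-- Explicit formula for the real part of `2iθ` at `z = x + iy`. -/
lemma re_key (ξ x y : ℝ) (hs : x^2 + y^2 ≠ 0) :
    (2 * Complex.I * theta ξ ((x:ℂ) + y*Complex.I)).re =
      (-y * ((3*x^2 - y^2)*((x^2+y^2)^3 + 1) + (ξ+3)*((x^2+y^2)^3 + (x^2+y^2)^2)))
        / (x^2+y^2)^3 := by
  have hz : (x:ℂ) + y*Complex.I ≠ 0 := by
    intro h
    apply hs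
    have hre : x = 0 := by simpa using congrArg Complex.re h
    have him : y = 0 := by simpa using congrArg Complex.im h
    simp [hre, him]
  have hsc : ((x:ℝ)^2 + (y:ℝ)^2 : ℂ) ≠ 0 := by
    exact_mod_cast Complex.ofReal_ne_zero.mpr hs
  have hinv : ((x:ℂ) + y*Complex.I)⁻¹ =
      ((x/(x^2+y^2) : ℝ) : ℂ) + ((-y/(x^2+y^2) : ℝ) : ℂ) * Complex.I := by
    symm
    apply eq_inv_of_mul_eq_one_left
    push_cast
    field_simp
    ring_nf
    rw [Complex.I_sq]
    ring
  have h2 : 2*Complex.I*theta ξ ((x:ℂ) + y*Complex.I) =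
      Complex.I * ((((x:ℂ) + y*Complex.I) - ((x:ℂ) + y*Complex.I)⁻¹) *
        (((ξ:ℝ):ℂ) + (((x:ℂ) + y*Complex.I) + ((x:ℂ) + y*Complex.I)⁻¹)
          * (((x:ℂ) + y*Complex.I) + ((x:ℂ) + y*Complex.I)⁻¹) + 2)) := by
    rw [theta]; ring
  rw [h2, hinv]
  simp only [Complex.mul_re, Complex.mul_im, Complex.add_re, Complex.add_im,
    Complex.sub_re, Complex.sub_im, Complex.I_re, Complex.I_im,
    Complex.ofReal_re, Complex.ofReal_im, Complex.re_ofNat, Complex.im_ofNat]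
  field_simp
  ring

/-- The square of the tangent of any angle `0 < φ < arccos(1/(√5−1))` is at most
`5 − 2√5 ≤ 0.5279`. -/
lemma tan_sq_bound (φ : ℝ) (hφ0 : 0 < φ)
    (hφ1 : φ < Real.arccos (1 / (Real.sqrt 5 - 1))) :
    Real.tan φ ^ 2 ≤ 5279/10000 := by
  have hsq : Real.sqrt 5 ^ 2 = 5 := Real.sq_sqrt (by norm_num)
  have hnn := Real.sqrt_nonneg 5
  have h2 : (44721/20000 : ℝ) ≤ Real.sqrt 5 := by nlinarith
  have h3 : Real.sqrt 5 ≤ 9/4 := by nlinarith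
  set c : ℝ := 1 / (Real.sqrt 5 - 1) with hc
  have hc0 : 0 < c := by rw [hc]; exact div_pos one_pos (by nlinarith)
  have hc1 : c ≤ 1 := by
    rw [hc, div_le_one (by nlinarith)]; nlinarith
  have harc : Real.arccos c < Real.pi / 2 := Real.arccos_lt_pi_div_two.mpr hc0
  have htlt : Real.tan φ < Real.tan (Real.arccos c) :=
    Real.tan_lt_tan_of_nonneg_of_lt_pi_div_two hφ0.le harc hφ1
  have ht0 : 0 ≤ Real.tan φ :=
    Real.tan_nonneg_of_nonneg_of_le_pi_div_two hφ0.le (by linarith [Real.pi_pos])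
  have htac : Real.tan (Real.arccos c) = Real.sqrt (1 - c^2) / c := Real.tan_arccos c
  have hsq2 : Real.tan (Real.arccos c) ^ 2 = (1 - c^2) / c^2 := by
    rw [htac, div_pow, Real.sq_sqrt (by nlinarith)]
  have hval : (1 - c^2) / c^2 = 5 - 2 * Real.sqrt 5 := by
    rw [hc]
    have hne : Real.sqrt 5 - 1 ≠ 0 := by nlinarith
    field_simp
    nlinarith [hsq]
  nlinarith [htlt, ht0, hsq2, hval, h2]

/-- Algebraic factorization of the phase: with `C = ξ + 3` satisfying
`C z₁² = −3(z₁⁴ − z₁² + 1)` and `s = x² + v²`, the quantity controlling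
`Re(2iθ)` factors through the saddle point `s = z₁²`. -/
lemma ident2 (z₁ x s v C : ℝ) (hC : C * z₁^2 = -(3*(z₁^4 - z₁^2 + 1)))
    (hs : s = x^2 + v^2) :
    z₁^2 * ((3*x^2 - v^2)*(s^3+1) + C*(s^3+s^2)) =
      3*s*(s+1)*(s - z₁^2)*(s*z₁^2 - 1) - 4*v^2*z₁^2*(s^3+1) := by
  linear_combination (s^3+s^2) * hC - 3*z₁^2*(s^3+1) * hs

/-- The core polynomial inequality. -/
lemma core2 (s s₁ v u : ℝ) (E : ℝ) (hs₁ : 1 ≤ s₁) (hs4 : s ≤ 4) (hs1 : 1 ≤ s)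
    (hE : 2 ≤ E) (hD : u * E ≤ s - s₁) (hu : 0 ≤ u)
    (hv2 : v ^ 2 ≤ (5279/10000) * u ^ 2) :
    (1/4) * u^2 * s^3 * s₁ + 4 * v^2 * s₁ * (s^3 + 1) ≤
      3 * s * (s + 1) * (s - s₁) * (s * s₁ - 1) := by
  have hD0 : 0 ≤ s - s₁ := le_trans (by positivity) hD
  have h2 : s₁ * (s - s₁) ≤ s * s₁ - 1 := by nlinarith
  have h3 : (u * E)^2 * s₁ ≤ (s - s₁) * (s * s₁ - 1) := by
    nlinarith [mul_le_mul hD hD (by positivity) hD0, sq_nonneg (u*E)]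
  have h4 : 12 * (s * (s + 1)) * (s₁ * u^2) ≤ 3 * s * (s + 1) * (s - s₁) * (s * s₁ - 1) := by
    have hss : 0 ≤ s * (s + 1) := by nlinarith
    have h5 : 4 * u^2 * s₁ ≤ (u*E)^2 * s₁ := by
      have hE2 : (4:ℝ) ≤ E^2 := by nlinarith
      have := mul_le_mul_of_nonneg_right hE2
        (mul_nonneg (sq_nonneg u) (by linarith : (0:ℝ) ≤ s₁))
      nlinarith [this]
    nlinarith [mul_le_mul_of_nonneg_left (le_trans h5 h3) hss]
  have h6 : (1/4) * s^3 + (5279/2500) * (s^3 + 1) ≤ 12 * (s * (s + 1)) := by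
    nlinarith [mul_nonneg (mul_nonneg (sub_nonneg.2 hs1) (sub_nonneg.2 hs4)) (sub_nonneg.2 hs1),
      mul_nonneg (sub_nonneg.2 hs1) (sub_nonneg.2 hs4), sq_nonneg (s-1), sq_nonneg (4-s)]
  have hs₁0 : 0 < s₁ := by linarith
  have h7 : ((1/4) * s^3 + (5279/2500) * (s^3+1)) * (s₁ * u^2) ≤ 12 * (s * (s+1)) * (s₁ * u^2) := by
    have : 0 ≤ s₁ * u^2 := by positivity
    exact mul_le_mul_of_nonneg_right h6 this
  have h8 : 4 * v^2 * s₁ * (s^3+1) ≤ (5279/2500) * (s^3+1) * (s₁ * u^2) := by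
    have hpos : 0 ≤ s₁ * (s^3+1) := by
      nlinarith [pow_pos (show (0:ℝ) < s by linarith) 3]
    nlinarith [mul_le_mul_of_nonneg_right hv2 hpos]
  nlinarith [h7, h8, h4]

/-- Fix `0 < φ < arccos(1/(√5 − 1))`, a saddle point `1 < z₁ ≤ 2` and
`ξ = −3(1 + z₁⁴)/z₁²`. Then for `z = z₁ + u + iv` with `u > 0`,
`0 < v ≤ u·tan φ` and `|z| ≤ 2`, one has `Re(2iθ(z)) ≤ −(1/4)u²v`. -/
theorem re_two_I_theta_sector_estimate (φ : ℝ) (hφ0 : 0 < φ)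
    (hφ1 : φ < Real.arccos (1 / (Real.sqrt 5 - 1)))
    (z₁ : ℝ) (hz₁ : 1 < z₁) (hz₁' : z₁ ≤ 2)
    (ξ : ℝ) (hξ : ξ = -3 * (1 + z₁ ^ 4) / z₁ ^ 2)
    (u v : ℝ) (hu : 0 < u) (hv : 0 < v) (hvu : v ≤ u * Real.tan φ)
    (habs : ‖((z₁ + u : ℝ) : ℂ) + v * Complex.I‖ ≤ 2) :
    (2 * Complex.I * theta ξ (((z₁ + u : ℝ) : ℂ) + v * Complex.I)).re ≤
      -(1 / 4) * u ^ 2 * v := by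
  have hx1 : 1 < z₁ + u := by linarith
  have hspos : 0 < (z₁+u)^2 + v^2 := by positivity
  have hz₁0 : (0:ℝ) < z₁^2 := by positivity
  have hs4 : (z₁+u)^2 + v^2 ≤ 4 := by
    have h1 : Complex.normSq (((z₁+u:ℝ):ℂ) + v*Complex.I) ≤ 4 := by
      rw [← Complex.sq_norm]
      nlinarith [norm_nonneg (((z₁+u:ℝ):ℂ) + v*Complex.I)]
    simp [Complex.normSq_apply] at h1
    nlinarith [h1]
  have hv2 : v^2 ≤ (5279/10000) * u^2 := by
    have ht := tan_sq_bound φ hφ0 hφ1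
    have h1 : v*v ≤ (u*Real.tan φ)*(u*Real.tan φ) :=
      mul_le_mul hvu hvu hv.le (le_trans hv.le hvu)
    nlinarith [mul_le_mul_of_nonneg_left ht (sq_nonneg u)]
  have hξ3 : (ξ+3) * z₁^2 = -(3*(z₁^4 - z₁^2 + 1)) := by
    rw [hξ]; field_simp; ring
  rw [re_key ξ (z₁+u) v (ne_of_gt hspos)]
  rw [div_le_iff₀ (pow_pos hspos 3)]
  obtain ⟨S, hS⟩ : ∃ S : ℝ, S = (z₁+u)^2 + v^2 := ⟨_, rfl⟩
  rw [← hS] at hs4 hspos ⊢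
  have hcore := core2 S (z₁^2) v u (z₁+u+1)
    (by nlinarith) hs4 (by rw [hS]; nlinarith) (by linarith)
    (by rw [hS]; nlinarith) hu.le hv2
  have hident := ident2 z₁ (z₁+u) S v (ξ+3) hξ3 hS
  have h9 : z₁^2 * ((1/4)*u^2*S^3) ≤
      z₁^2 * ((3*(z₁+u)^2 - v^2)*(S^3+1) + (ξ+3)*(S^3+S^2)) := by
    linarith [hcore, hident]
  have hH := le_of_mul_le_mul_left h9 hz₁0
  linarith [mul_le_mul_of_nonneg_left hH hv.le]
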